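/- Let S be a finite subset of the integers and let g : S → S be a bijection such that g(i) ∈ {i−1, i, i+1} for every i ∈ S. Then there exists a finite set P of integers such that: (a) for every p ∈ P both p and p+1 belong to S; (b) distinct elements p, p' ∈ P satisfy |p − p'| ≥ 2 (so the pairs {p, p+1} are pairwise disjoint); (c) g(p) = p+1 and g(p+1) = p for every p ∈ P; and (d) g(i) = i for every i ∈ S not lying in any pair {p, p+1} with p ∈ P. -/
import Mathlib


/-- **Lemma (permutations of displacement ≤ 1, part (ii)).**
Let `S` be a finite set of integers and `g` a bijection of `S` onto itself such that
`g i ∈ {i-1, i, i+1}` for all `i ∈ S`.  Then there is a finite set `P` of integers such that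
the pairs `{p, p+1}` for `p ∈ P` lie in `S` and are pairwise disjoint, `g` swaps `p` and
`p+1` for each `p ∈ P`, and `g` fixes every element of `S` lying in no such pair. -/
theorem stmt_0 (S : Finset ℤ) (g : ℤ → ℤ)
    (hbij : Set.BijOn g ↑S ↑S)
    (hdisp : ∀ i ∈ S, g i = i - 1 ∨ g i = i ∨ g i = i + 1) :
    ∃ P : Finset ℤ,
      (∀ p ∈ P, p ∈ S ∧ p + 1 ∈ S) ∧
      (∀ p ∈ P, ∀ p' ∈ P, p ≠ p' → 2 ≤ |p - p'|) ∧
      (∀ p ∈ P, g p = p + 1 ∧ g (p + 1) = p) ∧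
      (∀ i ∈ S, (∀ p ∈ P, i ≠ p ∧ i ≠ p + 1) → g i = i) := by
  classical
  have hmaps := hbij.mapsTo
  have hinj := hbij.injOn
  have hsurj := hbij.surjOn
  -- counting lemma: number of elements with g i ≤ t equals number of elements ≤ t
  have hcard : ∀ t : ℤ,
      (S.filter (fun i => g i ≤ t)).card = (S.filter (fun i => i ≤ t)).card := by
    intro t
    have himg : (S.filter (fun i => g i ≤ t)).image g = S.filter (fun i => i ≤ t) := by
      apply Finset.Subset.antisymm
      · intro j hj
        simp only [Finset.mem_image, Finset.mem_filter] at hj ⊢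
        obtain ⟨i, ⟨hiS, hgi⟩, rfl⟩ := hj
        exact ⟨hmaps hiS, hgi⟩
      · intro j hj
        simp only [Finset.mem_filter] at hj
        obtain ⟨i, hiS, hgi⟩ := hsurj hj.1
        simp only [Finset.mem_image, Finset.mem_filter]
        exact ⟨i, ⟨hiS, by rw [hgi]; exact hj.2⟩, hgi⟩
    rw [← himg]
    apply (Finset.card_image_of_injOn ?_).symm
    intro a ha b hb hab
    exact hinj (by simpa using (Finset.mem_filter.mp ha).1)
      (by simpa using (Finset.mem_filter.mp hb).1) hab
  -- crossing lemma
  have cross : ∀ t : ℤ, (t ∈ S ∧ g t = t + 1) ↔ (t + 1 ∈ S ∧ g (t + 1) = t) := by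
    intro t
    set A := S.filter (fun i => i ≤ t) with hA
    set B := S.filter (fun i => g i ≤ t) with hB
    have hcAB : B.card = A.card := hcard t
    have hsd : (A \ B).card = (B \ A).card := by
      rw [Finset.card_sdiff_comm hcAB.symm]
    constructor
    · rintro ⟨htS, hgt⟩
      have htAB : t ∈ A \ B := by
        simp only [hA, hB, Finset.mem_sdiff, Finset.mem_filter]
        refine ⟨⟨htS, le_refl t⟩, ?_⟩
        intro h
        omega
      have : (B \ A).Nonempty := by
        rw [← Finset.card_pos, ← hsd, Finset.card_pos]
        exact ⟨t, htAB⟩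
      obtain ⟨i, hi⟩ := this
      simp only [hA, hB, Finset.mem_sdiff, Finset.mem_filter] at hi
      obtain ⟨⟨hiS, hgi⟩, hnot⟩ := hi
      have hit : ¬ i ≤ t := fun h => hnot ⟨hiS, h⟩
      have hd := hdisp i hiS
      have hieq : i = t + 1 := by omega
      subst hieq
      exact ⟨hiS, by omega⟩
    · rintro ⟨htS, hgt⟩
      have htBA : t + 1 ∈ B \ A := by
        simp only [hA, hB, Finset.mem_sdiff, Finset.mem_filter]
        refine ⟨⟨htS, by omega⟩, ?_⟩
        intro h
        omega
      have : (A \ B).Nonempty := by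
        rw [← Finset.card_pos, hsd, Finset.card_pos]
        exact ⟨t + 1, htBA⟩
      obtain ⟨j, hj⟩ := this
      simp only [hA, hB, Finset.mem_sdiff, Finset.mem_filter] at hj
      obtain ⟨⟨hjS, hjt⟩, hnot⟩ := hj
      have hgj : ¬ g j ≤ t := fun h => hnot ⟨hjS, h⟩
      have hd := hdisp j hjS
      have hjeq : j = t := by omega
      subst hjeq
      exact ⟨hjS, by omega⟩
  refine ⟨S.filter (fun p => g p = p + 1), ?_, ?_, ?_, ?_⟩
  · intro p hp
    simp only [Finset.mem_filter] at hp
    exact ⟨hp.1, ((cross p).mp hp).1⟩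
  · intro p hp p' hp' hne
    simp only [Finset.mem_filter] at hp hp'
    by_contra h
    push_neg at h
    obtain ⟨h1, h2⟩ := abs_lt.mp h
    have hc : p' = p + 1 ∨ p = p' + 1 := by omega
    rcases hc with rfl | rfl
    · have := ((cross p).mp hp).2
      have := hp'.2
      omega
    · have := ((cross p').mp hp').2
      have := hp.2
      omega
  · intro p hp
    simp only [Finset.mem_filter] at hp
    exact ⟨hp.2, ((cross p).mp hp).2⟩
  · intro i hiS hfar
    rcases hdisp i hiS with h | h | h
    · -- g i = i - 1 means i - 1 ∈ P, contradiction
      have : (i - 1) ∈ S ∧ g (i - 1 + 1) = i - 1 + 1 - 1 := ⟨?_, ?_⟩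
      · exact absurd (hfar (i - 1) (by
          simp only [Finset.mem_filter]
          have := (cross (i - 1)).mpr ⟨by simpa using hiS, by simpa using h⟩
          exact ⟨this.1, this.2⟩)).2 (by omega)
      · exact ((cross (i - 1)).mpr ⟨by simpa using hiS, by simpa using h⟩).1
      · simp; omega
    · exact h
    · exact absurd rfl (hfar i (Finset.mem_filter.mpr ⟨hiS, h⟩)).1
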